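/- Let D = ⊕_{i<k} C_i ⊕ N be a countable direct sum of chains, with k > 0, where each C_i is a chain with exactly ℵ₀ siblings up to isomorphism, and N is a direct sum of chains with only finitely many non-trivial components each having exactly one sibling. Then D has exactly ℵ₀ siblings up to isomorphism. -/

import Mathlib

open Cardinal
set_option linter.unusedSectionVars false

/-- Two preorders are equimorphic (siblings) if each order-embeds into the other. -/
def Equimorphic (α : Type*) (β : Type*) [Preorder α] [Preorder β] : Prop :=
  Nonempty (α ↪o β) ∧ Nonempty (β ↪o α)

/-- The setoid identifying order-isomorphic equimorphic substructures. -/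
def sibSetoid (α : Type*) [Preorder α] : Setoid {S : Set α // Equimorphic S α} :=
  ⟨fun S T => Nonempty ((S : Set α) ≃o (T : Set α)),
    ⟨fun _ => ⟨OrderIso.refl _⟩, fun ⟨e⟩ => ⟨e.symm⟩, fun ⟨e⟩ ⟨f⟩ => ⟨e.trans f⟩⟩⟩

/-- The sibling number of a structure: the number of isomorphism classes of
substructures equimorphic to it (every sibling is isomorphic to such a substructure). -/
noncomputable def sibNumber (α : Type*) [Preorder α] : Cardinal :=
  #(Quotient (sibSetoid α))

set_option linter.unusedSectionVars false

section SigmaBasics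
variable {ι : Type*} {A : ι → Type*}

lemma sigma_fst_eq_of_le [∀ i, Preorder (A i)] {p q : Σ i, A i} (h : p ≤ q) : p.1 = q.1 := by
  rcases h with ⟨i, a, b, h⟩; rfl

lemma sigma_comparable [∀ i, LinearOrder (A i)] {p q : Σ i, A i} (h : p.1 = q.1) :
    p ≤ q ∨ q ≤ p := by
  obtain ⟨i, a⟩ := p; obtain ⟨j, b⟩ := q
  cases h
  rcases le_total a b with h | h
  · exact Or.inl (Sigma.LE.fiber _ _ _ h)
  · exact Or.inr (Sigma.LE.fiber _ _ _ h)

lemma sigma_eq_mk_of_fst {p : Σ i, A i} {j : ι} (h : p.1 = j) :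
    p = ⟨j, cast (congrArg A h) p.2⟩ :=
  Sigma.ext h (HEq.symm (cast_heq _ _))

end SigmaBasics

section SigmaLemmas
variable {ι ι' : Type*} {A : ι → Type*} {B : ι' → Type*}
  [∀ i, LinearOrder (A i)] [∀ i, LinearOrder (B i)]

/-- L2: build an embedding of sigma orders from an injective index map and
componentwise embeddings. -/
def sigmaEmb (g : ι → ι') (hg : Function.Injective g) (e : ∀ i, A i ↪o B (g i)) :
    (Σ i, A i) ↪o (Σ i, B i) where
  toFun p := ⟨g p.1, e p.1 p.2⟩
  inj' := by
    rintro ⟨i, a⟩ ⟨j, b⟩ h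
    obtain ⟨h1, h2⟩ := Sigma.mk.inj_iff.mp h
    cases hg h1
    cases (e i).injective (eq_of_heq h2)
    rfl
  map_rel_iff' := by
    rintro ⟨i, a⟩ ⟨j, b⟩
    constructor
    · intro h
      have h1 : g i = g j := sigma_fst_eq_of_le h
      cases hg h1
      rcases h with ⟨_, _, _, h⟩
      exact Sigma.LE.fiber _ _ _ ((e i).map_rel_iff.mp h)
    · rintro ⟨_, _, _, h⟩
      exact Sigma.LE.fiber _ _ _ ((e i).map_rel_iff.mpr h)

/-- L4: build an iso of sigma orders from an index bijection and componentwise isos. -/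
def sigmaIso (g : ι ≃ ι') (e : ∀ i, A i ≃o B (g i)) : (Σ i, A i) ≃o (Σ i, B i) where
  toEquiv := Equiv.sigmaCongr g (fun i => (e i).toEquiv)
  map_rel_iff' := by
    rintro ⟨i, a⟩ ⟨j, b⟩
    show (⟨g i, e i a⟩ : Σ i, B i) ≤ ⟨g j, e j b⟩ ↔ _
    constructor
    · intro h
      have h1 : g i = g j := sigma_fst_eq_of_le h
      cases g.injective h1
      rcases h with ⟨_, _, _, h⟩
      exact Sigma.LE.fiber _ _ _ ((e i).map_rel_iff.mp h)
    · rintro ⟨_, _, _, h⟩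
      exact Sigma.LE.fiber _ _ _ ((e i).map_rel_iff.mpr h)

variable [∀ i, Nonempty (A i)]

/-- L1: an embedding of sigma orders decomposes componentwise. -/
lemma sigmaEmb_decomp (f : (Σ i, A i) ↪o (Σ i, B i)) :
    ∃ g : ι → ι', Function.Injective g ∧
      ∀ i, ∃ e : A i ↪o B (g i), ∀ x, f ⟨i, x⟩ = ⟨g i, e x⟩ := by
  classical
  set g : ι → ι' := fun i => (f ⟨i, Classical.arbitrary (A i)⟩).1 with hgdef
  have key : ∀ i (x : A i), (f ⟨i, x⟩).1 = g i := by
    intro i x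
    rcases sigma_comparable (p := ⟨i, x⟩) (q := ⟨i, Classical.arbitrary (A i)⟩) rfl with h' | h'
    · exact sigma_fst_eq_of_le (f.map_rel_iff.mpr h')
    · exact (sigma_fst_eq_of_le (f.map_rel_iff.mpr h')).symm
  have hg : Function.Injective g := by
    intro i j hij
    have h : (f ⟨i, Classical.arbitrary (A i)⟩).1 = (f ⟨j, Classical.arbitrary (A j)⟩).1 := hij
    rcases sigma_comparable h with h' | h'
    · exact sigma_fst_eq_of_le (f.map_rel_iff.mp h')
    · exact (sigma_fst_eq_of_le (f.map_rel_iff.mp h')).symm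
  refine ⟨g, hg, fun i => ?_⟩
  set e0 : A i → B (g i) := fun x => cast (congrArg B (key i x)) (f ⟨i, x⟩).2 with he0def
  have he0 : ∀ x : A i, f ⟨i, x⟩ = ⟨g i, e0 x⟩ := fun x => sigma_eq_mk_of_fst (key i x)
  have hle : ∀ x y : A i, e0 x ≤ e0 y ↔ x ≤ y := by
    intro x y
    rw [← Sigma.mk_le_mk_iff (i := g i), ← he0, ← he0, f.map_rel_iff, Sigma.mk_le_mk_iff]
  exact ⟨OrderEmbedding.ofMapLEIff e0 hle, he0⟩

variable [∀ i, Nonempty (B i)]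

/-- L3: an iso of sigma orders decomposes componentwise. -/
lemma sigmaIso_decomp (f : (Σ i, A i) ≃o (Σ i, B i)) :
    ∃ g : ι ≃ ι', ∀ i, Nonempty (A i ≃o B (g i)) := by
  obtain ⟨g, hg, he⟩ := sigmaEmb_decomp (f : (Σ i, A i) ↪o (Σ i, B i))
  obtain ⟨g', hg', he'⟩ := sigmaEmb_decomp (f.symm : (Σ i, B i) ↪o (Σ i, A i))
  choose e heq0 using he
  choose e' heq0' using he'
  have heq : ∀ i (x : A i), f ⟨i, x⟩ = ⟨g i, e i x⟩ := heq0
  have heq' : ∀ j (y : B j), f.symm ⟨j, y⟩ = ⟨g' j, e' j y⟩ := heq0'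
  have hgg' : ∀ i, g' (g i) = i := by
    intro i
    have x0 := Classical.arbitrary (A i)
    have : f.symm (f ⟨i, x0⟩) = ⟨g' (g i), e' (g i) (e i x0)⟩ := by
      rw [heq]; exact heq' (g i) (e i x0)
    rw [f.symm_apply_apply] at this
    exact (congrArg Sigma.fst this).symm
  have hg'g : ∀ j, g (g' j) = j := by
    intro j
    have y0 := Classical.arbitrary (B j)
    have : f (f.symm ⟨j, y0⟩) = ⟨g (g' j), e (g' j) (e' j y0)⟩ := by
      rw [heq']; exact heq (g' j) (e' j y0)
    rw [f.apply_symm_apply] at this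
    exact (congrArg Sigma.fst this).symm
  refine ⟨⟨g, g', hgg', hg'g⟩, fun i => ?_⟩
  have hsurj : Function.Surjective (e i) := by
    intro y
    have h1 : f.symm ⟨g i, y⟩ = ⟨g' (g i), e' (g i) y⟩ := heq' (g i) y
    have h2 : (⟨g' (g i), e' (g i) y⟩ : Σ i, A i) = ⟨i, cast (congrArg A (hgg' i)) (e' (g i) y)⟩ :=
      sigma_eq_mk_of_fst (hgg' i)
    refine ⟨cast (congrArg A (hgg' i)) (e' (g i) y), ?_⟩
    have h3 : f (f.symm ⟨g i, y⟩) = (⟨g i, y⟩ : Σ i, B i) := f.apply_symm_apply _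
    rw [h1, h2, heq] at h3
    exact eq_of_heq (Sigma.mk.inj_iff.mp h3).2
  exact ⟨RelIso.ofSurjective (e i) hsurj⟩

end SigmaLemmas

section Decomp
variable {ι : Type*} {A : ι → Type*} [∀ i, LinearOrder (A i)]

/-- Decomposition of a subset of a sigma order with full support. -/
def decompIsoFull (S : Set (Σ i, A i)) :
    (S : Type _) ≃o Σ i, {x : A i // ⟨i, x⟩ ∈ S} where
  toFun p := ⟨p.1.1, ⟨p.1.2, by rw [Sigma.eta]; exact p.2⟩⟩
  invFun q := ⟨⟨q.1, q.2.1⟩, q.2.2⟩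
  left_inv := by rintro ⟨⟨i, x⟩, hp⟩; rfl
  right_inv := by rintro ⟨i, x, hx⟩; rfl
  map_rel_iff' := by
    rintro ⟨⟨i, x⟩, hp⟩ ⟨⟨j, y⟩, hq⟩
    show (⟨i, ⟨x, hp⟩⟩ : Σ i, {x : A i // ⟨i, x⟩ ∈ S}) ≤ ⟨j, ⟨y, hq⟩⟩ ↔
      (⟨i, x⟩ : Σ i, A i) ≤ ⟨j, y⟩
    constructor
    · rintro ⟨_, _, _, h⟩
      exact Sigma.LE.fiber _ _ _ h
    · rintro ⟨_, _, _, h⟩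
      exact Sigma.LE.fiber _ _ _ h

/-- Decomposition of a subset of a sigma order over its support. -/
def decompIso (S : Set (Σ i, A i)) :
    (S : Type _) ≃o Σ i : {i : ι // ∃ x : A i, ⟨i, x⟩ ∈ S}, {x : A i.1 // ⟨i.1, x⟩ ∈ S} where
  toFun p := ⟨⟨p.1.1, ⟨p.1.2, by rw [Sigma.eta]; exact p.2⟩⟩, ⟨p.1.2, by rw [Sigma.eta]; exact p.2⟩⟩
  invFun q := ⟨⟨q.1.1, q.2.1⟩, q.2.2⟩
  left_inv := by rintro ⟨⟨i, x⟩, hp⟩; rfl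
  right_inv := by rintro ⟨⟨i, hi⟩, x, hx⟩; rfl
  map_rel_iff' := by
    rintro ⟨⟨i, x⟩, hp⟩ ⟨⟨j, y⟩, hq⟩
    show (⟨⟨i, _⟩, ⟨x, hp⟩⟩ : Σ i : {i : ι // ∃ x : A i, ⟨i, x⟩ ∈ S},
        {x : A i.1 // ⟨i.1, x⟩ ∈ S}) ≤ ⟨⟨j, _⟩, ⟨y, hq⟩⟩ ↔ (⟨i, x⟩ : Σ i, A i) ≤ ⟨j, y⟩
    constructor
    · rintro ⟨_, _, _, h⟩
      exact Sigma.LE.fiber _ _ _ h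
    · intro h
      have hij : i = j := sigma_fst_eq_of_le h
      subst hij
      rcases h with ⟨_, _, _, h⟩
      exact Sigma.LE.fiber _ _ _ h

end Decomp

/-- Any two nonempty subsingleton preorders are order isomorphic. -/
noncomputable def subsingletonOrderIso (α β : Type*) [Preorder α] [Preorder β]
    [Subsingleton α] [Subsingleton β] [Nonempty α] [Nonempty β] : α ≃o β where
  toEquiv := equivOfSubsingletonOfSubsingleton (fun _ => Classical.arbitrary β)
    (fun _ => Classical.arbitrary α)
  map_rel_iff' := by
    intro a b
    have h1 : a = b := Subsingleton.elim a b
    subst h1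
    simp

section Lower
variable {ι : Type} {A : ι → Type} [∀ i, LinearOrder (A i)] [∀ i, Nonempty (A i)]

def phiSet (i0 : ι) (T : Set (A i0)) : Set (Σ i, A i) :=
  (fun x => (⟨i0, x⟩ : Σ i, A i)) '' T ∪ {p | p.1 ≠ i0}

lemma mem_phiSet_i0 {i0 : ι} {T : Set (A i0)} {x : A i0} :
    (⟨i0, x⟩ : Σ i, A i) ∈ phiSet i0 T ↔ x ∈ T := by
  constructor
  · rintro (⟨y, hy, hxy⟩ | h)
    · obtain ⟨h1, h2⟩ := Sigma.mk.inj_iff.mp hxy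
      cases eq_of_heq h2
      exact hy
    · exact absurd rfl h
  · intro h
    exact Or.inl ⟨x, h, rfl⟩

lemma phiFib0 {i0 : ι} {T : Set (A i0)} : {x : A i0 | ⟨i0, x⟩ ∈ phiSet i0 T} = T :=
  Set.ext fun _ => mem_phiSet_i0

lemma mem_phiSet_ne {i0 : ι} {T : Set (A i0)} {i : ι} (h : i ≠ i0) (x : A i) :
    (⟨i, x⟩ : Σ i, A i) ∈ phiSet i0 T := Or.inr h

lemma phiFibNe {i0 : ι} {T : Set (A i0)} {i : ι} (h : i ≠ i0) :
    {x : A i | ⟨i, x⟩ ∈ phiSet i0 T} = Set.univ :=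
  Set.eq_univ_of_forall fun x => mem_phiSet_ne h x

/-- Componentwise embeddings into the fibers of `phiSet`. -/
noncomputable def phiCompEmb (i0 : ι) (T : Set (A i0)) (embT : A i0 ↪o T) (i : ι) :
    A i ↪o {x : A i // ⟨i, x⟩ ∈ phiSet i0 T} := by
  classical
  by_cases h : i = i0
  · subst h
    exact embT.trans (OrderIso.setCongr T {x : A i | (⟨i, x⟩ : Σ j, A j) ∈ phiSet i T}
      phiFib0.symm).toOrderEmbedding
  · exact OrderEmbedding.ofMapLEIff (fun x => ⟨x, mem_phiSet_ne h x⟩) (fun _ _ => Iff.rfl)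

lemma phiFib_nonempty (i0 : ι) (T : Set (A i0)) (hT : T.Nonempty) (i : ι) :
    Nonempty {x : A i // ⟨i, x⟩ ∈ phiSet i0 T} := by
  classical
  by_cases h : i = i0
  · subst h
    obtain ⟨x, hx⟩ := hT
    exact ⟨⟨x, mem_phiSet_i0.mpr hx⟩⟩
  · exact ⟨⟨Classical.arbitrary (A i), mem_phiSet_ne h _⟩⟩

noncomputable def phiEquim (i0 : ι) (T : {S : Set (A i0) // Equimorphic S (A i0)}) :
    {S : Set (Σ i, A i) // Equimorphic S (Σ i, A i)} := by
  refine ⟨phiSet i0 T.1, ⟨OrderEmbedding.subtype _⟩, ?_⟩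
  obtain ⟨embT⟩ := T.2.2
  exact ⟨(sigmaEmb id Function.injective_id (phiCompEmb i0 T.1 embT)).trans
    (decompIsoFull (phiSet i0 T.1)).symm.toOrderEmbedding⟩

lemma phiEquim_sound (i0 : ι) (T T' : {S : Set (A i0) // Equimorphic S (A i0)})
    (h : Nonempty ((T.1 : Set (A i0)) ≃o (T'.1 : Set (A i0)))) :
    Nonempty ((phiSet i0 T.1 : Set (Σ i, A i)) ≃o (phiSet i0 T'.1 : Set (Σ i, A i))) := by
  classical
  obtain ⟨u⟩ := h
  refine ⟨(decompIsoFull _).trans ((sigmaIso (Equiv.refl ι) ?_).trans (decompIsoFull _).symm)⟩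
  intro i
  by_cases hi : i = i0
  · subst hi
    exact (OrderIso.setCongr _ _ phiFib0).trans
      (u.trans (OrderIso.setCongr _ _ phiFib0.symm))
  · exact OrderIso.setCongr _ _ ((phiFibNe hi).trans (phiFibNe hi).symm)

lemma phiEquim_inj (i0 : ι) (hfin : {i | Nontrivial (A i)}.Finite)
    (hnt : Nontrivial (A i0)) (T T' : {S : Set (A i0) // Equimorphic S (A i0)})
    (h : Nonempty ((phiSet i0 T.1 : Set (Σ i, A i)) ≃o (phiSet i0 T'.1 : Set (Σ i, A i)))) :
    Nonempty ((T.1 : Set (A i0)) ≃o (T'.1 : Set (A i0))) := by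
  classical
  obtain ⟨f⟩ := h
  obtain ⟨embT⟩ := T.2.2
  obtain ⟨embT'⟩ := T'.2.2
  have hTne : (T.1 : Set (A i0)).Nonempty := by
    obtain ⟨x⟩ : Nonempty T.1 := ⟨embT (Classical.arbitrary _)⟩
    exact ⟨x.1, x.2⟩
  have hTne' : (T'.1 : Set (A i0)).Nonempty := by
    obtain ⟨x⟩ : Nonempty T'.1 := ⟨embT' (Classical.arbitrary _)⟩
    exact ⟨x.1, x.2⟩
  haveI h1 : ∀ i, Nonempty {x : A i // ⟨i, x⟩ ∈ phiSet i0 T.1} := phiFib_nonempty i0 T.1 hTne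
  haveI h2 : ∀ i, Nonempty {x : A i // ⟨i, x⟩ ∈ phiSet i0 T'.1} := phiFib_nonempty i0 T'.1 hTne'
  have F := (decompIsoFull (phiSet i0 T.1)).symm.trans (f.trans (decompIsoFull (phiSet i0 T'.1)))
  obtain ⟨g, hg⟩ := sigmaIso_decomp F
  by_contra hno
  -- fibers
  have isoT : Nonempty ({x : A i0 // ⟨i0, x⟩ ∈ phiSet i0 T.1} ≃o T.1) :=
    ⟨OrderIso.setCongr _ _ phiFib0⟩
  have isoT' : Nonempty ({x : A i0 // ⟨i0, x⟩ ∈ phiSet i0 T'.1} ≃o T'.1) :=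
    ⟨OrderIso.setCongr _ _ phiFib0⟩
  have isoC : ∀ i, i ≠ i0 → Nonempty ({x : A i // ⟨i, x⟩ ∈ phiSet i0 T.1} ≃o A i) :=
    fun i hi => ⟨(OrderIso.setCongr _ _ (phiFibNe hi)).trans OrderIso.Set.univ⟩
  have isoC' : ∀ i, i ≠ i0 → Nonempty ({x : A i // ⟨i, x⟩ ∈ phiSet i0 T'.1} ≃o A i) :=
    fun i hi => ⟨(OrderIso.setCongr _ _ (phiFibNe hi)).trans OrderIso.Set.univ⟩
  set X : Set ι := {i | Nonempty ({x : A i // ⟨i, x⟩ ∈ phiSet i0 T.1} ≃o T.1)} with hX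
  set Y : Set ι := {i | Nonempty ({x : A i // ⟨i, x⟩ ∈ phiSet i0 T'.1} ≃o T.1)} with hY
  have hTnontriv : Nontrivial T.1 := embT.injective.nontrivial
  have hXY : ∀ i, i ∈ X ↔ g i ∈ Y := by
    intro i
    obtain ⟨e⟩ := hg i
    exact ⟨fun ⟨w⟩ => ⟨e.symm.trans w⟩, fun ⟨w⟩ => ⟨e.trans w⟩⟩
  have hX0 : i0 ∈ X := isoT
  have hY0 : i0 ∉ Y := by
    rintro ⟨w⟩
    obtain ⟨v⟩ := isoT'
    exact hno ⟨(w.symm.trans v)⟩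
  have hXi : ∀ i, i ≠ i0 → (i ∈ X ↔ i ∈ Y) := by
    intro i hi
    obtain ⟨c⟩ := isoC i hi
    obtain ⟨c'⟩ := isoC' i hi
    exact ⟨fun ⟨w⟩ => ⟨c'.trans (c.symm.trans w)⟩, fun ⟨w⟩ => ⟨c.trans (c'.symm.trans w)⟩⟩
  have hYX : Y = X \ {i0} := by
    ext i
    by_cases hi : i = i0
    · subst hi
      simp [hY0, hX0]
    · simp only [Set.mem_diff, Set.mem_singleton_iff, hi, not_false_iff, and_true]
      exact (hXi i hi).symm
  have hXfin : X.Finite := by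
    apply (hfin.union (Set.finite_singleton i0)).subset
    intro i hiX
    by_cases hi : i = i0
    · exact Or.inr hi
    · obtain ⟨c⟩ := isoC i hi
      obtain ⟨w⟩ := hiX
      have : Nontrivial (A i) := (c.symm.trans w).symm.injective.nontrivial
      exact Or.inl this
  -- cardinality contradiction
  have himg : g '' X = Y := by
    ext j
    constructor
    · rintro ⟨i, hi, rfl⟩
      exact (hXY i).mp hi
    · intro hj
      refine ⟨g.symm j, ?_, g.apply_symm_apply j⟩
      have := (hXY (g.symm j))
      rw [g.apply_symm_apply] at this
      exact this.mpr hj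
  have e1 : X.encard = Y.encard := by
    rw [← himg, g.injective.encard_image]
  have e2 : Y.encard + 1 = X.encard := by
    rw [hYX]
    exact Set.encard_diff_singleton_add_one hX0
  rw [e1] at e2
  have : Y.encard ≠ ⊤ := by
    rw [Set.encard_ne_top_iff]
    exact hXfin.subset (by rw [hYX]; exact Set.diff_subset)
  have hlt : Y.encard < Y.encard + 1 :=
    ENat.lt_add_one_iff this |>.mpr le_rfl
  rw [e2] at hlt
  exact lt_irrefl _ hlt

end Lower

section Upper
variable {ι : Type} {A : ι → Type} [∀ i, LinearOrder (A i)] [∀ i, Nonempty (A i)]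

/-- Transport an order iso along an index equality. -/
def eqOrderIso {κ : Type*} (Bf : κ → Type*) [∀ j, Preorder (Bf j)] {j j' : κ} (h : j = j') :
    Bf j ≃o Bf j' := by subst h; exact OrderIso.refl _

def psiSet (u : ∀ i : {i : ι // Nontrivial (A i)}, Set (A i.1)) : Set (Σ i, A i) :=
  {p | ∀ h : Nontrivial (A p.1), p.2 ∈ u ⟨p.1, h⟩}

lemma psiFib_nontriv (u : ∀ i : {i : ι // Nontrivial (A i)}, Set (A i.1)) {i : ι}
    (h : Nontrivial (A i)) : {x : A i | (⟨i, x⟩ : Σ i, A i) ∈ psiSet u} = u ⟨i, h⟩ := by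
  ext x
  constructor
  · intro hx
    exact hx h
  · intro hx h'
    exact hx

lemma psiFib_triv (u : ∀ i : {i : ι // Nontrivial (A i)}, Set (A i.1)) {i : ι}
    (h : ¬Nontrivial (A i)) (x : A i) : (⟨i, x⟩ : Σ i, A i) ∈ psiSet u :=
  fun h' => absurd h' h

/-- The canonical substructure attached to a choice of siblings of the nontrivial components. -/
noncomputable def psiEquim (u : ∀ i : {i : ι // Nontrivial (A i)},
    {S : Set (A i.1) // Equimorphic S (A i.1)}) :
    {S : Set (Σ i, A i) // Equimorphic S (Σ i, A i)} := by
  classical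
  refine ⟨psiSet (fun i => (u i).1), ⟨OrderEmbedding.subtype _⟩, ?_⟩
  refine ⟨(sigmaEmb id Function.injective_id ?_).trans
    (decompIsoFull (psiSet (fun i => (u i).1))).symm.toOrderEmbedding⟩
  intro i
  by_cases h : Nontrivial (A i)
  · have embU : A i ↪o (u ⟨i, h⟩).1 := Classical.choice (u ⟨i, h⟩).2.2
    exact embU.trans (OrderIso.setCongr _ {x : A i | (⟨i, x⟩ : Σ j, A j) ∈
      psiSet (fun i => (u i).1)} (psiFib_nontriv _ h).symm).toOrderEmbedding
  · exact OrderEmbedding.ofMapLEIff (fun x => ⟨x, psiFib_triv _ h x⟩) (fun _ _ => Iff.rfl)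

end Upper

section Upper2
variable {ι : Type} {A : ι → Type} [∀ i, LinearOrder (A i)] [∀ i, Nonempty (A i)]

abbrev Ssupp (S : Set (Σ i, A i)) : Type := {i : ι // ∃ x : A i, (⟨i, x⟩ : Σ i, A i) ∈ S}

abbrev Sfib (S : Set (Σ i, A i)) (t : Ssupp S) : Type :=
  {x : A t.1 // (⟨t.1, x⟩ : Σ i, A i) ∈ S}

instance (S : Set (Σ i, A i)) (t : Ssupp S) : Nonempty (Sfib S t) :=
  ⟨⟨t.2.choose, t.2.choose_spec⟩⟩

lemma psi_surj (hfin : {i | Nontrivial (A i)}.Finite) (S : Set (Σ i, A i))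
    (f : (S : Set (Σ i, A i)) ↪o (Σ i, A i)) (h : (Σ i, A i) ↪o (S : Set (Σ i, A i))) :
    ∃ u : ∀ i : {i : ι // Nontrivial (A i)}, {T : Set (A i.1) // Equimorphic T (A i.1)},
      Nonempty ((psiSet (fun i => (u i).1) : Set (Σ i, A i)) ≃o (S : Set (Σ i, A i))) := by
  classical
  have dec : (S : Set (Σ i, A i)) ≃o Σ t : Ssupp S, Sfib S t := decompIso S
  obtain ⟨σ, hσinj, hσ⟩ := sigmaEmb_decomp (dec.symm.toOrderEmbedding.trans f)
  obtain ⟨τ, hτinj, hτ⟩ := sigmaEmb_decomp (h.trans dec.toOrderEmbedding)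
  choose eσ heσ using hσ
  choose eτ heτ using hτ
  clear heσ heτ
  set ND : Set ι := {i | Nontrivial (A i)} with hND
  set NS : Set (Ssupp S) := {t | Nontrivial (Sfib S t)} with hNS
  have hσsub : σ '' NS ⊆ ND := by
    rintro _ ⟨t, ht, rfl⟩
    have : Nontrivial (Sfib S t) := ht
    exact (eσ t).injective.nontrivial
  have hτsub : τ '' ND ⊆ NS := by
    rintro _ ⟨i, hi, rfl⟩
    have : Nontrivial (A i) := hi
    exact (eτ i).injective.nontrivial
  have hNSfin : NS.Finite := by
    have : NS ⊆ σ ⁻¹' ND := fun t ht => hσsub ⟨t, ht, rfl⟩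
    exact (hfin.preimage hσinj.injOn).subset this
  have hcard : NS.encard = ND.encard := by
    apply le_antisymm
    · rw [← hσinj.encard_image NS]
      exact Set.encard_mono hσsub
    · rw [← hτinj.encard_image ND]
      exact Set.encard_mono hτsub
  have himgσ : σ '' NS = ND :=
    hfin.eq_of_subset_of_encard_le' hσsub (by rw [hσinj.encard_image NS, hcard])
  have himgτ : τ '' ND = NS :=
    hNSfin.eq_of_subset_of_encard_le' hτsub (by rw [hτinj.encard_image ND, hcard])
  -- the permutation of nontrivial components
  set NDt := {i : ι // Nontrivial (A i)} with hNDt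
  haveI : Finite NDt := hfin
  have hτND : ∀ i : NDt, τ i.1 ∈ NS := fun i => hτsub ⟨i.1, i.2, rfl⟩
  have hσNS : ∀ t : Ssupp S, t ∈ NS → Nontrivial (A (σ t)) := fun t ht =>
    hσsub ⟨t, ht, rfl⟩
  set π : NDt → NDt := fun i => ⟨σ (τ i.1), hσNS _ (hτND i)⟩ with hπ
  have hπinj : Function.Injective π := by
    intro i j hij
    have := Subtype.mk.injEq .. ▸ hij
    exact Subtype.ext (hτinj (hσinj (congrArg Subtype.val hij)))
  have hπbij : Function.Bijective π := Finite.injective_iff_bijective.mp hπinj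
  set eqv : Equiv.Perm NDt := Equiv.ofBijective π hπbij with heqv
  have step : ∀ i : NDt, Nonempty (A i.1 ↪o A (eqv i).1) :=
    fun i => ⟨(eτ i.1).trans (eσ (τ i.1))⟩
  have iter : ∀ (n : ℕ) (i : NDt), Nonempty (A i.1 ↪o A ((⇑eqv)^[n] i).1) := by
    intro n
    induction n with
    | zero => exact fun i => ⟨OrderEmbedding.ofMapLEIff id (fun _ _ => Iff.rfl)⟩
    | succ n ih =>
      intro i
      obtain ⟨w⟩ := ih (eqv i)
      obtain ⟨v⟩ := step i
      rw [Function.iterate_succ_apply]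
      exact ⟨v.trans w⟩
  have back : ∀ i : NDt, Nonempty (A (eqv i).1 ↪o A i.1) := by
    intro i
    have hpos : 0 < orderOf eqv := orderOf_pos eqv
    obtain ⟨w⟩ := iter (orderOf eqv - 1) (eqv i)
    have hiter : (⇑eqv)^[orderOf eqv - 1] (eqv i) = i := by
      rw [← Function.iterate_succ_apply]
      have hn : (orderOf eqv - 1).succ = orderOf eqv := Nat.succ_pred_eq_of_pos hpos
      rw [hn, ← Equiv.Perm.coe_pow, pow_orderOf_eq_one]
      rfl
    rw [hiter] at w
    exact ⟨w⟩
  -- embeddings realizing each nontrivial fiber of S as a sibling of the corresponding A i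
  have embBack : ∀ i : NDt, Sfib S (τ i.1) ↪o A i.1 := by
    intro i
    exact (eσ (τ i.1)).trans (Classical.choice (back i))
  -- the choice of siblings
  set u : ∀ i : NDt, {T : Set (A i.1) // Equimorphic T (A i.1)} := fun i =>
    ⟨Set.range (embBack i),
      ⟨OrderEmbedding.subtype _⟩,
      ⟨(eτ i.1).trans (OrderEmbedding.orderIso (f := embBack i)).toOrderEmbedding⟩⟩ with hu
  refine ⟨u, ?_⟩
  -- index bijection: nontrivial part
  have heNTsurj : ∀ t : Ssupp S, t ∈ NS → ∃ i : NDt, τ i.1 = t := by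
    intro t ht
    have : t ∈ τ '' ND := himgτ ▸ ht
    obtain ⟨i, hi, rfl⟩ := this
    exact ⟨⟨i, hi⟩, rfl⟩
  -- trivial part
  have t1 : ∀ i : ι, ¬Nontrivial (A i) → τ i ∉ NS := by
    intro i hi hmem
    rw [← himgτ] at hmem
    obtain ⟨i', hi', he⟩ := hmem
    exact hi (hτinj he ▸ hi')
  have t2 : ∀ t : Ssupp S, t ∉ NS → ¬Nontrivial (A (σ t)) := by
    intro t ht hσmem
    have : σ t ∈ σ '' NS := himgσ.symm ▸ hσmem
    obtain ⟨t', ht', he⟩ := this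
    exact ht (hσinj he ▸ ht')
  obtain ⟨gt, hgtbij⟩ := Function.Embedding.schroeder_bernstein
    (f := fun i : {i : ι // ¬Nontrivial (A i)} =>
      (⟨τ i.1, t1 i.1 i.2⟩ : {t : Ssupp S // t ∉ NS}))
    (g := fun t : {t : Ssupp S // t ∉ NS} =>
      (⟨σ t.1, t2 t.1 t.2⟩ : {i : ι // ¬Nontrivial (A i)}))
    (fun i j hij => Subtype.ext (hτinj (congrArg Subtype.val hij)))
    (fun s t hst => Subtype.ext (hσinj (congrArg Subtype.val hst)))
  set G : ι → Ssupp S := fun i =>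
    if hi : Nontrivial (A i) then τ i else (gt ⟨i, hi⟩).1 with hGdef
  have hGpos : ∀ i (hi : Nontrivial (A i)), G i = τ i := fun i hi => dif_pos hi
  have hGneg : ∀ i (hi : ¬Nontrivial (A i)), G i = (gt ⟨i, hi⟩).1 := fun i hi => dif_neg hi
  have hGbij : Function.Bijective G := by
    constructor
    · intro i j hij
      by_cases hi : Nontrivial (A i) <;> by_cases hj : Nontrivial (A j)
      · rw [hGpos i hi, hGpos j hj] at hij
        exact hτinj hij
      · rw [hGpos i hi, hGneg j hj] at hij
        exact absurd (hij ▸ hτND ⟨i, hi⟩) (gt ⟨j, hj⟩).2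
      · rw [hGneg i hi, hGpos j hj] at hij
        exact absurd (hij.symm ▸ hτND ⟨j, hj⟩) (gt ⟨i, hi⟩).2
      · rw [hGneg i hi, hGneg j hj] at hij
        exact congrArg Subtype.val (hgtbij.1 (Subtype.ext hij))
    · intro t
      by_cases ht : t ∈ NS
      · obtain ⟨i, hi⟩ := heNTsurj t ht
        exact ⟨i.1, by rw [hGpos i.1 i.2]; exact hi⟩
      · obtain ⟨i, hi⟩ := hgtbij.2 ⟨t, ht⟩
        refine ⟨i.1, ?_⟩
        rw [hGneg i.1 i.2]
        exact congrArg Subtype.val hi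
  set Geqv : ι ≃ Ssupp S := Equiv.ofBijective G hGbij with hGeqv
  -- componentwise isos
  have eIso : ∀ i : ι,
      {x : A i // (⟨i, x⟩ : Σ i, A i) ∈ psiSet (fun j => (u j).1)} ≃o Sfib S (Geqv i) := by
    intro i
    by_cases hi : Nontrivial (A i)
    · have hGi : Geqv i = τ i := hGpos i hi
      refine ((OrderIso.setCongr _ _ (psiFib_nontriv (fun j => (u j).1) hi)).trans
        ((OrderEmbedding.orderIso (f := embBack ⟨i, hi⟩)).symm.trans
          (eqOrderIso (Sfib S) hGi.symm)))
    · have h2 : ¬Nontrivial (Sfib S (Geqv i)) := by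
        have hGi : Geqv i = (gt ⟨i, hi⟩).1 := hGneg i hi
        rw [hGi]
        exact (gt ⟨i, hi⟩).2
      haveI := not_nontrivial_iff_subsingleton.mp hi
      haveI := not_nontrivial_iff_subsingleton.mp h2
      haveI : Nonempty {x : A i // (⟨i, x⟩ : Σ i, A i) ∈ psiSet (fun j => (u j).1)} :=
        ⟨⟨Classical.arbitrary (A i), psiFib_triv (fun j => (u j).1) hi _⟩⟩
      exact subsingletonOrderIso _ _
  exact ⟨(decompIsoFull (psiSet (fun j => (u j).1))).trans
    ((sigmaIso Geqv eIso).trans dec.symm)⟩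

lemma psi_sound (u u' : ∀ i : {i : ι // Nontrivial (A i)},
    {T : Set (A i.1) // Equimorphic T (A i.1)})
    (hrel : ∀ i, Nonempty (((u i).1 : Set (A i.1)) ≃o ((u' i).1 : Set (A i.1)))) :
    Nonempty ((psiSet (fun i => (u i).1) : Set (Σ i, A i)) ≃o
      (psiSet (fun i => (u' i).1) : Set (Σ i, A i))) := by
  classical
  refine ⟨(decompIsoFull _).trans ((sigmaIso (Equiv.refl ι) ?_).trans (decompIsoFull _).symm)⟩
  intro i
  by_cases hi : Nontrivial (A i)
  · exact (OrderIso.setCongr _ _ (psiFib_nontriv (fun j => (u j).1) hi)).trans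
      ((Classical.choice (hrel ⟨i, hi⟩)).trans
        (OrderIso.setCongr _ _ (psiFib_nontriv (fun j => (u' j).1) hi).symm))
  · exact OrderIso.setCongr _ _
      (Set.ext fun x => iff_of_true (psiFib_triv _ hi x) (psiFib_triv _ hi x))

lemma sibNumber_sigma_le_aleph0 (hfin : {i | Nontrivial (A i)}.Finite)
    (hone : ∀ i, Nontrivial (A i) → sibNumber (A i) ≤ ℵ₀) :
    sibNumber (Σ i, A i) ≤ ℵ₀ := by
  classical
  haveI : Finite {i : ι // Nontrivial (A i)} := hfin
  haveI : ∀ i : {i : ι // Nontrivial (A i)}, Countable (Quotient (sibSetoid (A i.1))) := by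
    intro i
    rw [← Cardinal.mk_le_aleph0_iff]
    exact hone i.1 i.2
  set F : (∀ i : {i : ι // Nontrivial (A i)}, Quotient (sibSetoid (A i.1))) →
      Quotient (sibSetoid (Σ i, A i)) :=
    fun w => Quotient.mk (sibSetoid (Σ i, A i)) (psiEquim (fun i => (w i).out)) with hF
  have hsurj : Function.Surjective F := by
    intro q
    induction q using Quotient.inductionOn with
    | h T =>
      obtain ⟨⟨f⟩, ⟨h⟩⟩ := T.2
      obtain ⟨u, hiso⟩ := psi_surj hfin T.1 f h
      refine ⟨fun i => Quotient.mk (sibSetoid (A i.1)) (u i), ?_⟩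
      apply Quotient.sound
      have hrel : ∀ i : {i : ι // Nontrivial (A i)},
          Nonempty ((((Quotient.mk (sibSetoid (A i.1)) (u i)).out).1 : Set (A i.1)) ≃o
            ((u i).1 : Set (A i.1))) :=
        fun i => Quotient.mk_out (s := sibSetoid (A i.1)) (u i)
      obtain ⟨w1⟩ := psi_sound _ _ hrel
      obtain ⟨w2⟩ := hiso
      exact ⟨w1.trans w2⟩
  exact le_trans (Cardinal.mk_le_of_surjective hsurj) Cardinal.mk_le_aleph0

end Upper2

section Assemble
variable {ι : Type} {A : ι → Type} [∀ i, LinearOrder (A i)] [∀ i, Nonempty (A i)]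

lemma sibNumber_le_sibNumber_sigma (i0 : ι) (hfin : {i | Nontrivial (A i)}.Finite)
    (hnt : Nontrivial (A i0)) :
    sibNumber (A i0) ≤ sibNumber (Σ i, A i) := by
  have hwd : ∀ T T', (sibSetoid (A i0)) T T' →
      (sibSetoid (Σ i, A i)) (phiEquim i0 T) (phiEquim i0 T') :=
    fun T T' h => phiEquim_sound i0 T T' h
  apply Cardinal.mk_le_of_injective (f := Quotient.map (phiEquim i0) hwd)
  intro q q' hqq
  induction q using Quotient.inductionOn with
  | h T =>
    induction q' using Quotient.inductionOn with
    | h T' =>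
      apply Quotient.sound
      exact phiEquim_inj i0 hfin hnt T T' (Quotient.exact hqq)

lemma nontrivial_of_sibNumber_eq_aleph0 (α : Type) [Preorder α] (h : sibNumber α = ℵ₀) :
    Nontrivial α := by
  by_contra hn
  haveI : Subsingleton α := not_nontrivial_iff_subsingleton.mp hn
  have h1 : sibNumber α ≤ 2 ^ #α :=
    le_trans Cardinal.mk_quotient_le (Cardinal.mk_set ▸ Cardinal.mk_subtype_le _)
  have h2 : #α ≤ 1 := Cardinal.le_one_iff_subsingleton.mpr inferInstance
  have h3 : (2 : Cardinal) ^ #α ≤ 2 ^ (1 : Cardinal) :=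
    Cardinal.power_le_power_left two_ne_zero h2
  have h4 : sibNumber α ≤ 2 := by
    rw [Cardinal.power_one] at h3
    exact h1.trans h3
  rw [h] at h4
  exact absurd (h4.trans_lt (by exact_mod_cast Cardinal.nat_lt_aleph0 2)) (lt_irrefl _)

end Assemble

theorem sib_aleph0_of_finitely_many_aleph0_components (k : ℕ) (hk : 0 < k) (J : Type)
    (C : Fin k ⊕ J → Type) [∀ i, LinearOrder (C i)] [∀ i, Nonempty (C i)]
    [Countable J] [∀ i, Countable (C i)]
    (hC : ∀ i : Fin k, sibNumber (C (Sum.inl i)) = ℵ₀)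
    (hNfin : {j : J | Nontrivial (C (Sum.inr j))}.Finite)
    (hNone : ∀ j : J, Nontrivial (C (Sum.inr j)) → sibNumber (C (Sum.inr j)) = 1) :
    sibNumber (Σ i, C i) = ℵ₀ := by
  have hfinND : {i : Fin k ⊕ J | Nontrivial (C i)}.Finite := by
    have hsub : {i : Fin k ⊕ J | Nontrivial (C i)} ⊆
        (Set.range Sum.inl) ∪ (Sum.inr '' {j | Nontrivial (C (Sum.inr j))}) := by
      rintro (i | j) hi
      · exact Or.inl ⟨i, rfl⟩
      · exact Or.inr ⟨j, hi, rfl⟩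
    exact ((Set.finite_range Sum.inl).union (hNfin.image _)).subset hsub
  have hnt : Nontrivial (C (Sum.inl ⟨0, hk⟩)) :=
    nontrivial_of_sibNumber_eq_aleph0 _ (hC ⟨0, hk⟩)
  apply le_antisymm
  · apply sibNumber_sigma_le_aleph0 hfinND
    intro i hi
    match i with
    | Sum.inl i => exact (hC i).le
    | Sum.inr j => exact (hNone j hi).le.trans Cardinal.one_le_aleph0
  · calc ℵ₀ = sibNumber (C (Sum.inl ⟨0, hk⟩)) := (hC _).symm
      _ ≤ _ := sibNumber_le_sibNumber_sigma (Sum.inl ⟨0, hk⟩) hfinND hnt
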